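/- Let P : C^op → InfSl be a first-order hyperdoctrine (fibres are Heyting algebras, reindexings are Heyting morphisms, with left and right adjoints ∃_f ⊣ P_f ⊣ ∀_f along all arrows satisfying Beck–Chevalley) that satisfies the Comprehension Axiom (for every X there exist P(X) and ∈_X ∈ P(X × P(X)) such that for all Y and α ∈ P(X×Y) the sentence ∀i:Y ∃s:P(X) ∀x:X (∈_X(x,s) ↔ α(x,i)) holds) and the Rule of Choice (⊤_A ≤ ∃_{π_A}(α) implies existence of f : A → B with ⊤_A ≤ P_{⟨id,f⟩}(α)). Then P has weak power objects: for every α ∈ P(X × Y) there exists an arrow {α} : Y → P(X) such that P_{id_X × {α}}(∈_X) = α; hence P is a tripos. -/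

import Mathlib

open CategoryTheory CategoryTheory.Limits

universe w v u

/-- A (full) first-order hyperdoctrine: fibres are Heyting algebras, reindexing maps
are Heyting algebra morphisms, and reindexing along every arrow has both a left
adjoint `ex` and a right adjoint `all`, satisfying Beck–Chevalley. -/
structure FOHyp (C : Type u) [Category.{v} C] where
  P : C → Type w
  [instHA : ∀ A, HeytingAlgebra (P A)]
  map : ∀ {A B : C}, (A ⟶ B) → P B → P A
  map_id : ∀ (A : C) (x : P A), map (𝟙 A) x = x
  map_comp : ∀ {A B D : C} (f : A ⟶ B) (g : B ⟶ D) (x : P D),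
      map (f ≫ g) x = map f (map g x)
  map_mono : ∀ {A B : C} (f : A ⟶ B), Monotone (map f)
  map_top : ∀ {A B : C} (f : A ⟶ B), map f (⊤ : P B) = ⊤
  map_bot : ∀ {A B : C} (f : A ⟶ B), map f (⊥ : P B) = ⊥
  map_inf : ∀ {A B : C} (f : A ⟶ B) (x y : P B), map f (x ⊓ y) = map f x ⊓ map f y
  map_sup : ∀ {A B : C} (f : A ⟶ B) (x y : P B), map f (x ⊔ y) = map f x ⊔ map f y
  map_himp : ∀ {A B : C} (f : A ⟶ B) (x y : P B), map f (x ⇨ y) = map f x ⇨ map f y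
  ex : ∀ {A B : C}, (A ⟶ B) → P A → P B
  all : ∀ {A B : C}, (A ⟶ B) → P A → P B
  ex_adj : ∀ {A B : C} (f : A ⟶ B) (a : P A) (b : P B), ex f a ≤ b ↔ a ≤ map f b
  all_adj : ∀ {A B : C} (f : A ⟶ B) (a : P A) (b : P B), map f b ≤ a ↔ b ≤ all f a
  bc_ex : ∀ {W X Y Z : C} (p : W ⟶ X) (q : W ⟶ Y) (f : X ⟶ Z) (g : Y ⟶ Z),
    IsPullback p q f g → ∀ a : P Y, map f (ex g a) = ex p (map q a)
  bc_all : ∀ {W X Y Z : C} (p : W ⟶ X) (q : W ⟶ Y) (f : X ⟶ Z) (g : Y ⟶ Z),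
    IsPullback p q f g → ∀ a : P Y, map f (all g a) = all p (map q a)

attribute [instance] FOHyp.instHA

variable {C : Type u} [Category.{v} C] [HasBinaryProducts C]

/-- Internal bi-implication in a fibre. -/
def FOHyp.biimp (H : FOHyp.{w} C) {A : C} (a b : H.P A) : H.P A := (a ⇨ b) ⊓ (b ⇨ a)

/-- The Comprehension Axiom: for every `X` there are `PX` and `∈_X ∈ P(X ⨯ PX)` such
that for all `Y` and `α ∈ P(X ⨯ Y)` the sentence
`∀ i:Y. ∃ s:PX. ∀ x:X. (∈_X(x,s) ↔ α(x,i))` holds in the internal language. -/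
def SatisfiesCA (H : FOHyp.{w} C) : Prop :=
  ∀ X : C, ∃ (PX : C) (mem : H.P (X ⨯ PX)), ∀ (Y : C) (α : H.P (X ⨯ Y)),
    (⊤ : H.P Y) ≤ H.ex (prod.snd : PX ⨯ Y ⟶ Y)
      (H.all (prod.snd : X ⨯ (PX ⨯ Y) ⟶ PX ⨯ Y)
        (H.biimp (H.map (prod.map (𝟙 X) (prod.fst : PX ⨯ Y ⟶ PX)) mem)
          (H.map (prod.map (𝟙 X) (prod.snd : PX ⨯ Y ⟶ Y)) α)))

/-- The Rule of Choice: if `⊤_A ≤ ∃_{π_A}(α)` then some `f : A ⟶ B` satisfies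
`⊤_A ≤ P_{⟨𝟙,f⟩}(α)`. -/
def SatisfiesRC (H : FOHyp.{w} C) : Prop :=
  ∀ {A B : C} (α : H.P (A ⨯ B)), (⊤ : H.P A) ≤ H.ex (prod.fst : A ⨯ B ⟶ A) α →
    ∃ f : A ⟶ B, (⊤ : H.P A) ≤ H.map (prod.lift (𝟙 A) f) α

section Aux
variable {C : Type u} [Category.{v} C] [HasBinaryProducts C]

lemma FOHyp.ex_comp' (H : FOHyp.{w} C) {A B D : C} (f : A ⟶ B) (g : B ⟶ D) (a : H.P A) :
    H.ex (f ≫ g) a = H.ex g (H.ex f a) := by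
  have u1 : a ≤ H.map f (H.ex f a) := (H.ex_adj f a _).mp le_rfl
  have u2 : H.ex f a ≤ H.map g (H.ex g (H.ex f a)) := (H.ex_adj g _ _).mp le_rfl
  apply le_antisymm
  · exact (H.ex_adj (f ≫ g) a _).mpr
      (by rw [H.map_comp]; exact u1.trans (H.map_mono f u2))
  · exact (H.ex_adj g _ _).mpr ((H.ex_adj f _ _).mpr
      (by rw [← H.map_comp]; exact (H.ex_adj (f ≫ g) a _).mp le_rfl))

lemma FOHyp.ex_iso (H : FOHyp.{w} C) {A B : C} (f : A ⟶ B) (g : B ⟶ A)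
    (hfg : f ≫ g = 𝟙 A) (hgf : g ≫ f = 𝟙 B) (a : H.P A) :
    H.ex f a = H.map g a := by
  apply le_antisymm
  · rw [H.ex_adj, ← H.map_comp, hfg, H.map_id]
  · have h1 : a ≤ H.map f (H.ex f a) := by rw [← H.ex_adj]
    calc H.map g a ≤ H.map g (H.map f (H.ex f a)) := H.map_mono g h1
      _ = H.ex f a := by rw [← H.map_comp, hgf, H.map_id]

/-- The standard pullback square for products. -/
lemma isPullback_snd_map {X A B : C} (h : A ⟶ B) :
    IsPullback (prod.snd : X ⨯ A ⟶ A) (prod.map (𝟙 X) h) h (prod.snd : X ⨯ B ⟶ B) := by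
  refine IsPullback.of_isLimit' ⟨by simp⟩ ?_
  refine PullbackCone.IsLimit.mk _ (fun s => prod.lift (s.snd ≫ prod.fst) s.fst) ?_ ?_ ?_
  · intro s; simp [prod.lift_fst, prod.lift_snd]
  · intro s
    apply Limits.prod.hom_ext
    · simp [prod.lift_fst, prod.lift_snd, prod.lift_fst_assoc, prod.lift_snd_assoc]
    · simpa [prod.lift_fst, prod.lift_snd, prod.lift_fst_assoc, prod.lift_snd_assoc] using s.condition
  · intro s m h1 h2
    apply Limits.prod.hom_ext
    · have := h2 =≫ (prod.fst : X ⨯ B ⟶ X)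
      simpa [prod.lift_fst, prod.lift_snd, prod.lift_fst_assoc, prod.lift_snd_assoc] using this
    · simpa [prod.lift_fst, prod.lift_snd, prod.lift_fst_assoc, prod.lift_snd_assoc] using h1

end Aux

/-- a first-order hyperdoctrine satisfying the Comprehension Axiom and the
Rule of Choice has weak power objects (hence is a tripos): for every `X` there are `PX`
and `∈_X ∈ P(X ⨯ PX)` such that every `α ∈ P(X ⨯ Y)` is `P_{𝟙 × {α}}(∈_X)` for some
arrow `{α} : Y ⟶ PX`. -/
theorem ca_rc_implies_weakPowerObjects (H : FOHyp.{w} C)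
    (hCA : SatisfiesCA H) (hRC : SatisfiesRC H) :
    ∀ X : C, ∃ (PX : C) (mem : H.P (X ⨯ PX)), ∀ (Y : C) (α : H.P (X ⨯ Y)),
      ∃ g : Y ⟶ PX, H.map (prod.map (𝟙 X) g) mem = α := by
  intro X
  obtain ⟨PX, mem, hmem⟩ := hCA X
  refine ⟨PX, mem, fun Y α => ?_⟩
  -- the internal formula
  set β : H.P (PX ⨯ Y) :=
    H.all (prod.snd : X ⨯ (PX ⨯ Y) ⟶ PX ⨯ Y)
      (H.biimp (H.map (prod.map (𝟙 X) (prod.fst : PX ⨯ Y ⟶ PX)) mem)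
        (H.map (prod.map (𝟙 X) (prod.snd : PX ⨯ Y ⟶ Y)) α)) with hβ
  have hsent : (⊤ : H.P Y) ≤ H.ex (prod.snd : PX ⨯ Y ⟶ Y) β := hmem Y α
  -- swap isomorphism
  set s : Y ⨯ PX ⟶ PX ⨯ Y := prod.lift prod.snd prod.fst with hs
  set s' : PX ⨯ Y ⟶ Y ⨯ PX := prod.lift prod.snd prod.fst with hs'
  have hss' : s ≫ s' = 𝟙 (Y ⨯ PX) := by
    apply Limits.prod.hom_ext <;> simp [hs, hs', prod.lift_fst, prod.lift_snd, prod.lift_fst_assoc, prod.lift_snd_assoc]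
  have hs's : s' ≫ s = 𝟙 (PX ⨯ Y) := by
    apply Limits.prod.hom_ext <;> simp [hs, hs', prod.lift_fst, prod.lift_snd, prod.lift_fst_assoc, prod.lift_snd_assoc]
  have hfst : (prod.fst : Y ⨯ PX ⟶ Y) = s ≫ prod.snd := by simp [hs, prod.lift_fst, prod.lift_snd, prod.lift_fst_assoc, prod.lift_snd_assoc]
  have key : H.ex (prod.fst : Y ⨯ PX ⟶ Y) (H.map s β) = H.ex (prod.snd : PX ⨯ Y ⟶ Y) β := by
    rw [hfst, H.ex_comp', H.ex_iso s s' hss' hs's, ← H.map_comp, hs's, H.map_id]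
  obtain ⟨f, hf⟩ := hRC (H.map s β) (by rw [key]; exact hsent)
  refine ⟨f, ?_⟩
  have hcomp : prod.lift (𝟙 Y) f ≫ s = prod.lift f (𝟙 Y) := by
    apply Limits.prod.hom_ext <;> simp [hs, prod.lift_fst, prod.lift_snd, prod.lift_fst_assoc, prod.lift_snd_assoc]
  rw [← H.map_comp, hcomp] at hf
  -- Beck–Chevalley for ∀ along the pullback square
  set h : Y ⟶ PX ⨯ Y := prod.lift f (𝟙 Y) with hh
  have hpb := isPullback_snd_map (X := X) h
  have hbc := H.bc_all (prod.snd : X ⨯ Y ⟶ Y) (prod.map (𝟙 X) h) h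
      (prod.snd : X ⨯ (PX ⨯ Y) ⟶ PX ⨯ Y) hpb
  rw [hβ, hbc] at hf
  -- move under the ∀
  have hf' : (⊤ : H.P (X ⨯ Y)) ≤
      H.map (prod.map (𝟙 X) h)
        (H.biimp (H.map (prod.map (𝟙 X) (prod.fst : PX ⨯ Y ⟶ PX)) mem)
          (H.map (prod.map (𝟙 X) (prod.snd : PX ⨯ Y ⟶ Y)) α)) := by
    have := (H.all_adj (prod.snd : X ⨯ Y ⟶ Y) _ ⊤).mpr hf
    rwa [H.map_top] at this
  rw [FOHyp.biimp, H.map_inf, H.map_himp, H.map_himp, ← H.map_comp, ← H.map_comp] at hf'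
  have e1 : prod.map (𝟙 X) h ≫ prod.map (𝟙 X) (prod.fst : PX ⨯ Y ⟶ PX)
      = prod.map (𝟙 X) f := by
    rw [prod.map_map]; simp [hh, prod.lift_fst, prod.lift_snd, prod.lift_fst_assoc, prod.lift_snd_assoc]
  have e2 : prod.map (𝟙 X) h ≫ prod.map (𝟙 X) (prod.snd : PX ⨯ Y ⟶ Y) = 𝟙 (X ⨯ Y) := by
    rw [prod.map_map]; simp [hh, prod.lift_fst, prod.lift_snd, prod.lift_fst_assoc, prod.lift_snd_assoc]
  rw [e1, e2, H.map_id] at hf'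
  have h1 : H.map (prod.map (𝟙 X) f) mem ≤ α := by
    have := hf'.trans inf_le_left
    rwa [top_le_iff, himp_eq_top_iff] at this
  have h2 : α ≤ H.map (prod.map (𝟙 X) f) mem := by
    have := hf'.trans inf_le_right
    rwa [top_le_iff, himp_eq_top_iff] at this
  exact le_antisymm h1 h2
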